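/- For every real C > 0 and every j ∈ ℕ there exists θ₀ > 0 such that for every θ with 0 < θ ≤ θ₀ there exist S₀, n₀ ∈ ℕ with the following property: for all n ≥ n₀ and all natural numbers s, s' with S₀ ≤ s, (s : ℝ) ≤ n·(1/2 + θ), and (s' : ℝ) ≤ θ·s, one has (C(n,s') : ℝ) ≤ n^{−j} · (C(n,s) : ℝ)^{1/C}. -/
import Mathlib

open Real

lemma pow_le_pow_mul_choose : ∀ (s n : ℕ), s ≤ n → n ^ s ≤ s ^ s * n.choose s := by
  intro s
  induction s with
  | zero => intro n _; simp
  | succ s ih =>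
    intro n hsn
    obtain ⟨m, rfl⟩ : ∃ m, n = m + 1 := ⟨n - 1, by omega⟩
    have hsm : s ≤ m := by omega
    have key : (m + 1) * m.choose s = (m + 1).choose (s + 1) * (s + 1) :=
      Nat.add_one_mul_choose_eq m s
    have ihm := ih m hsm
    have hx : (m + 1) * s ≤ (s + 1) * m := by nlinarith
    have hpow : (m + 1) ^ s * s ^ s ≤ (s + 1) ^ s * m ^ s := by
      rw [← Nat.mul_pow, ← Nat.mul_pow]; exact Nat.pow_le_pow_left hx s
    have main : (m + 1) ^ (s + 1) * ((s + 1) * s ^ s)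
        ≤ (s + 1) ^ (s + 1) * (m + 1).choose (s + 1) * ((s + 1) * s ^ s) := by
      calc (m + 1) ^ (s + 1) * ((s + 1) * s ^ s)
          = (m + 1) * ((m + 1) ^ s * s ^ s) * (s + 1) := by ring
        _ ≤ (m + 1) * ((s + 1) ^ s * m ^ s) * (s + 1) :=
            Nat.mul_le_mul_right _ (Nat.mul_le_mul_left _ hpow)
        _ ≤ (m + 1) * ((s + 1) ^ s * (s ^ s * m.choose s)) * (s + 1) :=
            Nat.mul_le_mul_right _ (Nat.mul_le_mul_left _ (Nat.mul_le_mul_left _ ihm))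
        _ = (s + 1) ^ s * s ^ s * (s + 1) * ((m + 1) * m.choose s) := by ring
        _ = (s + 1) ^ s * s ^ s * (s + 1) * ((m + 1).choose (s + 1) * (s + 1)) := by rw [key]
        _ = (s + 1) ^ (s + 1) * (m + 1).choose (s + 1) * ((s + 1) * s ^ s) := by ring
    have hpos : 0 < (s + 1) * s ^ s := by
      rcases Nat.eq_zero_or_pos s with h | h
      · subst h; simp
      · exact Nat.mul_pos (by omega) (Nat.pow_pos h)
    exact Nat.le_of_mul_le_mul_right main hpos

lemma g_mono {N a b : ℝ} (ha : 0 ≤ a) (hab : a ≤ b) (hbN : b ≤ N) :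
    a * (1 + Real.log N - Real.log a) ≤ b * (1 + Real.log N - Real.log b) := by
  rcases eq_or_lt_of_le ha with h0 | ha0
  · rcases eq_or_lt_of_le hab with h1 | hb0
    · rw [← h1]
    · rw [← h0]
      have hb : 0 < b := h0 ▸ hb0
      have hlb : Real.log b ≤ Real.log N := Real.log_le_log hb hbN
      nlinarith
  · have hb : 0 < b := lt_of_lt_of_le ha0 hab
    have h1 : Real.log b - Real.log a = Real.log (b / a) := (Real.log_div hb.ne' ha0.ne').symm
    have h2 : Real.log (b / a) ≤ b / a - 1 := Real.log_le_sub_one_of_pos (div_pos hb ha0)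
    have h3 : a * (Real.log b - Real.log a) ≤ b - a := by
      rw [h1]
      calc a * Real.log (b / a) ≤ a * (b / a - 1) := mul_le_mul_of_nonneg_left h2 ha0.le
        _ = b - a := by field_simp
    have hlb : Real.log b ≤ Real.log N := Real.log_le_log hb hbN
    nlinarith

lemma log_factorial_lb (k : ℕ) : (k : ℝ) * Real.log k ≤ Real.log (k.factorial) + k := by
  have h := Real.pow_div_factorial_le_exp (x := (k : ℝ)) (Nat.cast_nonneg k) k
  have hf : (0 : ℝ) < (k.factorial : ℝ) := by exact_mod_cast k.factorial_pos
  have h2 : ((k : ℝ)) ^ k ≤ (k.factorial : ℝ) * Real.exp k := by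
    rw [div_le_iff₀ hf] at h; linarith [h]
  rcases Nat.eq_zero_or_pos k with rfl | hk
  · simp
  · have hkpos : (0 : ℝ) < k := by exact_mod_cast hk
    have := Real.log_le_log (by positivity) h2
    rw [Real.log_pow, Real.log_mul hf.ne' (Real.exp_pos _).ne', Real.log_exp] at this
    exact this

set_option maxHeartbeats 1600000 in
theorem binom_coeff_estimate (C : ℝ) (hC : 0 < C) (j : ℕ) :
    ∃ θ₀ : ℝ, 0 < θ₀ ∧ ∀ θ : ℝ, 0 < θ → θ ≤ θ₀ →
      ∃ S₀ n₀ : ℕ, ∀ n : ℕ, n₀ ≤ n → ∀ s s' : ℕ,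
        S₀ ≤ s → (s : ℝ) ≤ (n : ℝ) * (1 / 2 + θ) → (s' : ℝ) ≤ θ * (s : ℝ) →
        (n.choose s' : ℝ) ≤ (n : ℝ) ^ (-(j : ℝ)) * (n.choose s : ℝ) ^ (1 / C) := by
  have hL32 : 0 < Real.log (3 / 2) := Real.log_pos (by norm_num)
  refine ⟨min (min (1/6) (1/(4*C))) ((Real.log (3/2)/(8*C))^2),
    lt_min (lt_min (by norm_num) (by positivity)) (by positivity), ?_⟩
  intro θ hθ hθθ₀
  refine ⟨⌈4*C*(j:ℝ)⌉₊ + 1, ⌈(8*C*(j:ℝ)/Real.log (3/2))^4⌉₊ + 2, ?_⟩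
  intro n hn s s' hS₀s hsn hs'
  have hθ16 : θ ≤ 1/6 := hθθ₀.trans ((min_le_left _ _).trans (min_le_left _ _))
  have hθ4C : θ ≤ 1/(4*C) := hθθ₀.trans ((min_le_left _ _).trans (min_le_right _ _))
  have hθsq : θ ≤ (Real.log (3/2)/(8*C))^2 := hθθ₀.trans (min_le_right _ _)
  have hs1 : 1 ≤ s := le_trans (by omega) hS₀s
  have hsR : (1:ℝ) ≤ (s:ℝ) := by exact_mod_cast hs1
  have hs_pos : (0:ℝ) < s := by linarith
  have hn0R : (0:ℝ) < n := by
    have : (s:ℝ) ≤ (n:ℝ) * (1/2 + θ) := hsn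
    nlinarith
  have hs23 : (s:ℝ) ≤ 2/3 * n := by nlinarith
  have h32s : 3/2 * (s:ℝ) ≤ n := by linarith
  have hsltn : (s:ℝ) < n := by linarith
  have hsn_nat : s ≤ n := by exact_mod_cast hsltn.le
  have hnR1 : (1:ℝ) ≤ n := by linarith
  have hLn0 : 0 ≤ Real.log n := Real.log_nonneg hnR1
  have hθs_le_s : θ * (s:ℝ) ≤ s := by nlinarith
  have hs'n : (s':ℝ) ≤ n := le_trans hs' (le_trans hθs_le_s hsltn.le)
  have hs'n_nat : s' ≤ n := by exact_mod_cast hs'n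
  have hchoose_s_pos : (0:ℝ) < n.choose s := by exact_mod_cast Nat.choose_pos hsn_nat
  have hchoose_s'_pos : (0:ℝ) < n.choose s' := by exact_mod_cast Nat.choose_pos hs'n_nat
  set T := Real.log n - Real.log s with hTdef
  clear_value T
  have hT : Real.log (3/2) ≤ T := by
    have h := Real.log_le_log (by positivity : (0:ℝ) < 3/2 * s) h32s
    rw [Real.log_mul (by norm_num) hs_pos.ne'] at h
    simp only [hTdef]; linarith
  have hT0 : 0 < T := lt_of_lt_of_le hL32 hT
  -- Step A : upper bound on log choose n s'
  have hA : Real.log (n.choose s') ≤ (θ * s) * (1 + Real.log n - Real.log (θ * s)) := by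
    have sub1 : (n.choose s' : ℝ) ≤ (n:ℝ) ^ s' / (s'.factorial : ℝ) :=
      Nat.choose_le_pow_div s' n
    have hfpos : (0:ℝ) < (s'.factorial : ℝ) := by exact_mod_cast s'.factorial_pos
    have l1 : Real.log (n.choose s') ≤ (s':ℝ) * Real.log n - Real.log (s'.factorial : ℝ) := by
      have := Real.log_le_log hchoose_s'_pos sub1
      rwa [Real.log_div (by positivity) hfpos.ne', Real.log_pow] at this
    have l2 := log_factorial_lb s'
    have l3 : Real.log (n.choose s') ≤ (s':ℝ) * (1 + Real.log n - Real.log s') := by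
      have : (s':ℝ) * (1 + Real.log n - Real.log s')
          = (s':ℝ) * Real.log n - ((s':ℝ) * Real.log s' - s') := by ring
      rw [this]; linarith
    have l4 := g_mono (N := (n:ℝ)) (a := (s':ℝ)) (b := θ * s)
      (Nat.cast_nonneg s') hs' (le_trans hθs_le_s hsltn.le)
    linarith
  -- Step B : lower bound on log choose n s
  have hB : (s:ℝ) * T ≤ Real.log (n.choose s) := by
    have h := pow_le_pow_mul_choose s n hsn_nat
    have hcast : ((n:ℝ)) ^ s ≤ (s:ℝ) ^ s * (n.choose s : ℝ) := by exact_mod_cast h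
    have := Real.log_le_log (by positivity) hcast
    rw [Real.log_mul (by positivity) hchoose_s_pos.ne', Real.log_pow, Real.log_pow] at this
    simp only [hTdef]; linarith
  -- small θ bound
  have h_small : θ * (1 - Real.log θ) ≤ T / (4*C) := by
    have hsθ : 0 < Real.sqrt θ := Real.sqrt_pos.2 hθ
    have hθeq : Real.sqrt θ * Real.sqrt θ = θ := Real.mul_self_sqrt hθ.le
    have hlog : Real.log (Real.sqrt θ)⁻¹ ≤ (Real.sqrt θ)⁻¹ - 1 :=
      Real.log_le_sub_one_of_pos (by positivity)
    rw [Real.log_inv] at hlog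
    have hlogθ : Real.log θ = 2 * Real.log (Real.sqrt θ) := by
      rw [Real.log_sqrt hθ.le]; ring
    have step1 : θ * (1 - Real.log θ) ≤ 2 * Real.sqrt θ := by
      have hinv : θ * (Real.sqrt θ)⁻¹ = Real.sqrt θ := by
        rw [← div_eq_mul_inv, Real.div_sqrt]
      have hm := mul_le_mul_of_nonneg_left hlog hθ.le
      rw [hlogθ]
      linarith [hm, hinv]
    have hsqrtθ : Real.sqrt θ ≤ Real.log (3/2)/(8*C) := by
      have := Real.sqrt_le_sqrt hθsq
      rwa [Real.sqrt_sq (by positivity)] at this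
    have id1 : Real.log (3/2)/(4*C) = 2 * (Real.log (3/2)/(8*C)) := by
      field_simp; ring
    have : Real.log (3/2)/(4*C) ≤ T/(4*C) := by gcongr
    linarith
  -- mid bound
  have h_mid : θ * T ≤ T / (4*C) := by
    have := mul_le_mul_of_nonneg_right hθ4C hT0.le
    calc θ * T ≤ 1/(4*C) * T := this
      _ = T / (4*C) := by ring
  -- j bound
  have h_j : (j:ℝ) * Real.log n ≤ (s:ℝ) * T / (2*C) := by
    rcases le_or_gt (s:ℝ) (Real.sqrt n) with hcase | hcase
    · have hLs : Real.log s ≤ Real.log n / 2 := by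
        have := Real.log_le_log hs_pos hcase
        rwa [Real.log_sqrt hn0R.le] at this
      have hT2 : Real.log n / 2 ≤ T := by simp only [hTdef]; linarith
      have h4Cj : 4*C*(j:ℝ) ≤ s := by
        have h1 : 4*C*(j:ℝ) ≤ (⌈4*C*(j:ℝ)⌉₊ : ℝ) := Nat.le_ceil _
        have h2 : ((⌈4*C*(j:ℝ)⌉₊ + 1 : ℕ) : ℝ) ≤ s := by exact_mod_cast hS₀s
        push_cast at h2; linarith
      rw [le_div_iff₀ (by positivity : (0:ℝ) < 2*C)]
      linarith [mul_le_mul h4Cj hT2 (by linarith : (0:ℝ) ≤ Real.log n / 2) hs_pos.le]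
    · set Q : ℝ := (n:ℝ) ^ ((1:ℝ)/4) with hQdef
      set K : ℝ := 8*C*(j:ℝ)/Real.log (3/2) with hKdef
      clear_value Q K
      have hQ0 : 0 < Q := by rw [hQdef]; exact Real.rpow_pos_of_pos hn0R _
      have hK0 : 0 ≤ K := by rw [hKdef]; positivity
      have hnK : K^4 ≤ (n:ℝ) := by
        have h1 : K^4 ≤ (⌈K^4⌉₊ : ℝ) := Nat.le_ceil _
        have h2 : ((⌈K^4⌉₊ + 2 : ℕ) : ℝ) ≤ n := by exact_mod_cast hn
        push_cast at h2; linarith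
      have hKQ : K ≤ Q := by
        have h1 : (K^4) ^ ((1:ℝ)/4) ≤ Q := by
          rw [hQdef]; exact Real.rpow_le_rpow (by positivity) hnK (by norm_num)
        have h2 : (K^4) ^ ((1:ℝ)/4) = K := by
          rw [← Real.rpow_natCast K 4, ← Real.rpow_mul hK0]; norm_num
        linarith [h2 ▸ h1]
      have hLn4 : Real.log n ≤ 4 * Q := by
        have h1 := Real.log_le_sub_one_of_pos hQ0
        rw [hQdef] at h1 ⊢
        rw [Real.log_rpow hn0R] at h1
        linarith
      have hQQ : Real.sqrt n = Q * Q := by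
        rw [hQdef, ← Real.rpow_add hn0R, Real.sqrt_eq_rpow]; norm_num
      have hsT : Real.sqrt n * Real.log (3/2) ≤ (s:ℝ) * T :=
        mul_le_mul hcase.le hT hL32.le hs_pos.le
      have hKL : K * Real.log (3/2) = 8*C*(j:ℝ) := by
        rw [hKdef, div_mul_cancel₀ _ hL32.ne']
      rw [le_div_iff₀ (by positivity : (0:ℝ) < 2*C)]
      have key : 8*C*(j:ℝ)*Q ≤ Q * Q * Real.log (3/2) := by
        calc 8*C*(j:ℝ)*Q = K * Real.log (3/2) * Q := by rw [hKL]
          _ ≤ Q * Real.log (3/2) * Q := by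
              exact mul_le_mul_of_nonneg_right
                (mul_le_mul_of_nonneg_right hKQ hL32.le) hQ0.le
          _ = Q * Q * Real.log (3/2) := by ring
      rw [hQQ] at hsT
      linarith [mul_le_mul_of_nonneg_left hLn4 (by positivity : (0:ℝ) ≤ 2*C*(j:ℝ))]
  -- assemble
  have hRHSpos : (0:ℝ) < (n:ℝ) ^ (-(j:ℝ)) * (n.choose s : ℝ) ^ (1/C) := by
    have := Real.rpow_pos_of_pos hn0R (-(j:ℝ))
    have := Real.rpow_pos_of_pos hchoose_s_pos (1/C)
    positivity
  rw [← Real.log_le_log_iff hchoose_s'_pos hRHSpos, Real.log_mul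
    (Real.rpow_pos_of_pos hn0R _).ne' (Real.rpow_pos_of_pos hchoose_s_pos _).ne',
    Real.log_rpow hn0R, Real.log_rpow hchoose_s_pos]
  have hlogθs : Real.log (θ * s) = Real.log θ + Real.log s :=
    Real.log_mul hθ.ne' hs_pos.ne'
  rw [hlogθs] at hA
  have e1 : (s:ℝ) * (θ * (1 - Real.log θ)) ≤ (s:ℝ) * (T/(4*C)) :=
    mul_le_mul_of_nonneg_left h_small hs_pos.le
  have e2 : (s:ℝ) * (θ * T) ≤ (s:ℝ) * (T/(4*C)) :=
    mul_le_mul_of_nonneg_left h_mid hs_pos.le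
  have hBC : 1/C * ((s:ℝ) * T) ≤ 1/C * Real.log (n.choose s) :=
    mul_le_mul_of_nonneg_left hB (by positivity)
  have idA : (θ * s) * (1 + Real.log n - (Real.log θ + Real.log s))
      = (s:ℝ) * (θ * (1 - Real.log θ)) + (s:ℝ) * (θ * T) := by
    simp only [hTdef]; ring
  have id2 : (s:ℝ) * (T/(4*C)) + (s:ℝ) * (T/(4*C)) = (s:ℝ) * T / (2*C) := by
    field_simp; ring
  have id3 : (s:ℝ) * T / (2*C) + (s:ℝ) * T / (2*C) = 1/C * ((s:ℝ) * T) := by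
    field_simp; ring
  linarith
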